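/- Let S and A be finite nonempty sets, let p (true dynamics) and p̂ (learned model) be dynamics kernels, let π_D and π be policies, ρ0 an initial state distribution, r a reward bounded by r_max ≥ 0, γ ∈ (0,1), and k ∈ ℕ. Suppose (i) for every timestep t, the expectation over (s,a) drawn from the time-t state-action marginal of the new policy π under p of TV(p(·|s,a), p̂(·|s,a)) is at most ε_{m'}, and (ii) max_s TV(π_D(·|s), π(·|s)) ≤ ε_π. Let η^branch[π] denote the return of the k-branched process that runs policy π under the model p̂ for the first k timesteps and policy π_D under the true dynamics p thereafter. Then η[π] ≥ η^branch[π] − 2·r_max·[ γ^{k+1}·ε_π/(1−γ)² + γ^k·ε_π/(1−γ) + k·ε_{m'}/(1−γ) ], where η[π] is the return of π under p. -/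

import Mathlib

open scoped BigOperators

/-- Total variation distance between two probability mass functions on a finite type. -/
noncomputable def tv {X : Type*} [Fintype X] (q1 q2 : PMF X) : ℝ :=
  (1 / 2) * ∑ x, |(q1 x).toReal - (q2 x).toReal|

/-- Total variation distance between two real-valued distributions on a finite type. -/
noncomputable def tvFun {X : Type*} [Fintype X] (d1 d2 : X → ℝ) : ℝ :=
  (1 / 2) * ∑ x, |d1 x - d2 x|

/-- Time-`t` state-action marginal of a (possibly time-varying) policy/dynamics pair,
started from initial state distribution `ρ0`:  `d⁰(s,a) = ρ0(s)·π₀(a|s)` and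
`d^{t+1}(s,a) = Σ_{s',a'} d^t(s',a')·p_t(s|s',a')·π_{t+1}(a|s)`. -/
noncomputable def marginal {S A : Type*} [Fintype S] [Fintype A]
    (ρ0 : PMF S) (πseq : ℕ → S → PMF A) (pseq : ℕ → S × A → PMF S) :
    ℕ → S × A → ℝ
  | 0 => fun sa => (ρ0 sa.1).toReal * ((πseq 0 sa.1) sa.2).toReal
  | t + 1 => fun sa =>
      ∑ s' : S, ∑ a' : A,
        marginal ρ0 πseq pseq t (s', a') * ((pseq t (s', a')) sa.1).toReal *
          ((πseq (t + 1) sa.1) sa.2).toReal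

/-- Discounted return `η = Σ_t γ^t Σ_{s,a} d^t(s,a)·r(s,a)`. -/
noncomputable def ret {S A : Type*} [Fintype S] [Fintype A]
    (γ : ℝ) (r : S × A → ℝ) (d : ℕ → S × A → ℝ) : ℝ :=
  ∑' t : ℕ, γ ^ t * ∑ sa : S × A, d t sa * r sa

/- ------------------------ Auxiliary lemmas ------------------------ -/

lemma pmf_sum_toReal {X : Type*} [Fintype X] (q : PMF X) : ∑ x, (q x).toReal = 1 := by
  have h := q.tsum_coe
  rw [tsum_fintype] at h
  rw [← ENNReal.toReal_sum (fun x _ => PMF.apply_ne_top q x), h, ENNReal.toReal_one]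

lemma tv_nonneg {X : Type*} [Fintype X] (q1 q2 : PMF X) : 0 ≤ tv q1 q2 := by
  unfold tv; positivity

lemma sum_abs_eq_two_tv {X : Type*} [Fintype X] (q1 q2 : PMF X) :
    ∑ x, |(q1 x).toReal - (q2 x).toReal| = 2 * tv q1 q2 := by
  unfold tv; ring

lemma tv_self {X : Type*} [Fintype X] (q : PMF X) : tv q q = 0 := by
  simp [tv]

lemma tv_comm {X : Type*} [Fintype X] (q1 q2 : PMF X) : tv q1 q2 = tv q2 q1 := by
  unfold tv
  congr 1
  exact Finset.sum_congr rfl fun x _ => abs_sub_comm _ _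

lemma marginal_nonneg {S A : Type*} [Fintype S] [Fintype A]
    (ρ0 : PMF S) (πseq : ℕ → S → PMF A) (pseq : ℕ → S × A → PMF S) :
    ∀ t sa, 0 ≤ marginal ρ0 πseq pseq t sa := by
  intro t
  induction t with
  | zero => intro sa; unfold marginal; positivity
  | succ n ih =>
    intro sa
    unfold marginal
    apply Finset.sum_nonneg; intro s' _
    apply Finset.sum_nonneg; intro a' _
    have := ih (s', a')
    positivity

lemma marginal_sum_one {S A : Type*} [Fintype S] [Fintype A]
    (ρ0 : PMF S) (πseq : ℕ → S → PMF A) (pseq : ℕ → S × A → PMF S) :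
    ∀ t, ∑ sa : S × A, marginal ρ0 πseq pseq t sa = 1 := by
  intro t
  induction t with
  | zero =>
    rw [Fintype.sum_prod_type]
    simp only [marginal]
    calc ∑ s, ∑ a, (ρ0 s).toReal * ((πseq 0 s) a).toReal
        = ∑ s, (ρ0 s).toReal * ∑ a, ((πseq 0 s) a).toReal := by
          simp [Finset.mul_sum]
      _ = ∑ s, (ρ0 s).toReal := by simp [pmf_sum_toReal]
      _ = 1 := pmf_sum_toReal ρ0
  | succ n ih =>
    rw [Fintype.sum_prod_type]
    simp only [marginal]
    calc ∑ s, ∑ a, ∑ s' : S, ∑ a' : A,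
          marginal ρ0 πseq pseq n (s', a') * ((pseq n (s', a')) s).toReal *
            ((πseq (n + 1) s) a).toReal
        = ∑ s, ∑ s' : S, ∑ a' : A,
            marginal ρ0 πseq pseq n (s', a') * ((pseq n (s', a')) s).toReal *
              ∑ a, ((πseq (n + 1) s) a).toReal := by
          congr 1; ext s; rw [Finset.sum_comm]
          congr 1; ext s'; rw [Finset.sum_comm]
          congr 1; ext a'; rw [Finset.mul_sum]
      _ = ∑ s, ∑ s' : S, ∑ a' : A,
            marginal ρ0 πseq pseq n (s', a') * ((pseq n (s', a')) s).toReal := by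
          simp [pmf_sum_toReal]
      _ = ∑ s' : S, ∑ a' : A,
            marginal ρ0 πseq pseq n (s', a') * ∑ s, ((pseq n (s', a')) s).toReal := by
          rw [Finset.sum_comm]
          congr 1; ext s'; rw [Finset.sum_comm]
          congr 1; ext a'; rw [Finset.mul_sum]
      _ = ∑ s' : S, ∑ a' : A, marginal ρ0 πseq pseq n (s', a') := by
          simp [pmf_sum_toReal]
      _ = 1 := by rw [← Fintype.sum_prod_type]; exact ih

section Step
variable {S A : Type*} [Fintype S] [Fintype A]

/-- One transition step applied to a (signed) measure on state-action pairs. -/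
noncomputable def tstep (f : S × A → ℝ) (P : S × A → PMF S) (po : S → PMF A) (sa : S × A) : ℝ :=
  ∑ s' : S, ∑ a' : A, f (s', a') * ((P (s', a')) sa.1).toReal * ((po sa.1) sa.2).toReal

lemma step_dyn (f : S × A → ℝ) (hf : ∀ sa, 0 ≤ f sa) (P P' : S × A → PMF S) (po : S → PMF A) :
    ∑ sa : S × A, |tstep f P po sa - tstep f P' po sa| ≤
      ∑ sa : S × A, f sa * (2 * tv (P sa) (P' sa)) := by
  calc ∑ sa : S × A, |tstep f P po sa - tstep f P' po sa|
      ≤ ∑ sa : S × A, ∑ s' : S, ∑ a' : A,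
          f (s', a') * |((P (s', a')) sa.1).toReal - ((P' (s', a')) sa.1).toReal| *
            ((po sa.1) sa.2).toReal := by
        apply Finset.sum_le_sum; intro sa _
        unfold tstep
        rw [← Finset.sum_sub_distrib]
        refine (Finset.abs_sum_le_sum_abs _ _).trans ?_
        apply Finset.sum_le_sum; intro s' _
        rw [← Finset.sum_sub_distrib]
        refine (Finset.abs_sum_le_sum_abs _ _).trans ?_
        apply Finset.sum_le_sum; intro a' _
        have h : f (s', a') * ((P (s', a')) sa.1).toReal * ((po sa.1) sa.2).toReal -
            f (s', a') * ((P' (s', a')) sa.1).toReal * ((po sa.1) sa.2).toReal =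
            f (s', a') * (((P (s', a')) sa.1).toReal - ((P' (s', a')) sa.1).toReal) *
              ((po sa.1) sa.2).toReal := by ring
        rw [h, abs_mul, abs_mul, abs_of_nonneg (hf _), abs_of_nonneg ENNReal.toReal_nonneg]
    _ = ∑ s' : S, ∑ a' : A, ∑ sa : S × A,
          f (s', a') * |((P (s', a')) sa.1).toReal - ((P' (s', a')) sa.1).toReal| *
            ((po sa.1) sa.2).toReal := by
        rw [Finset.sum_comm]
        congr 1; ext s'; rw [Finset.sum_comm]
    _ = ∑ sa : S × A, f sa * (2 * tv (P sa) (P' sa)) := by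
        rw [Fintype.sum_prod_type]
        congr 1; ext s'; congr 1; ext a'
        rw [Fintype.sum_prod_type]
        calc ∑ s : S, ∑ a : A,
              f (s', a') * |((P (s', a')) s).toReal - ((P' (s', a')) s).toReal| *
                ((po s) a).toReal
            = ∑ s : S, f (s', a') * |((P (s', a')) s).toReal - ((P' (s', a')) s).toReal| := by
              congr 1; ext s
              rw [← Finset.mul_sum, pmf_sum_toReal, mul_one]
          _ = f (s', a') * ∑ s : S, |((P (s', a')) s).toReal - ((P' (s', a')) s).toReal| := by
              rw [Finset.mul_sum]
          _ = f (s', a') * (2 * tv (P (s', a')) (P' (s', a'))) := by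
              rw [sum_abs_eq_two_tv]

lemma step_meas (f g : S × A → ℝ) (P : S × A → PMF S) (po : S → PMF A) :
    ∑ sa : S × A, |tstep f P po sa - tstep g P po sa| ≤ ∑ sa : S × A, |f sa - g sa| := by
  calc ∑ sa : S × A, |tstep f P po sa - tstep g P po sa|
      ≤ ∑ sa : S × A, ∑ s' : S, ∑ a' : A,
          |f (s', a') - g (s', a')| * ((P (s', a')) sa.1).toReal * ((po sa.1) sa.2).toReal := by
        apply Finset.sum_le_sum; intro sa _
        unfold tstep
        rw [← Finset.sum_sub_distrib]
        refine (Finset.abs_sum_le_sum_abs _ _).trans ?_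
        apply Finset.sum_le_sum; intro s' _
        rw [← Finset.sum_sub_distrib]
        refine (Finset.abs_sum_le_sum_abs _ _).trans ?_
        apply Finset.sum_le_sum; intro a' _
        have h : f (s', a') * ((P (s', a')) sa.1).toReal * ((po sa.1) sa.2).toReal -
            g (s', a') * ((P (s', a')) sa.1).toReal * ((po sa.1) sa.2).toReal =
            (f (s', a') - g (s', a')) * ((P (s', a')) sa.1).toReal * ((po sa.1) sa.2).toReal := by
          ring
        rw [h, abs_mul, abs_mul, abs_of_nonneg (ENNReal.toReal_nonneg :
          (0:ℝ) ≤ (((P (s', a')) sa.1)).toReal), abs_of_nonneg ENNReal.toReal_nonneg]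
    _ = ∑ s' : S, ∑ a' : A, ∑ sa : S × A,
          |f (s', a') - g (s', a')| * ((P (s', a')) sa.1).toReal * ((po sa.1) sa.2).toReal := by
        rw [Finset.sum_comm]
        congr 1; ext s'; rw [Finset.sum_comm]
    _ = ∑ sa : S × A, |f sa - g sa| := by
        rw [Fintype.sum_prod_type]
        congr 1; ext s'; congr 1; ext a'
        rw [Fintype.sum_prod_type]
        calc ∑ s : S, ∑ a : A,
              |f (s', a') - g (s', a')| * ((P (s', a')) s).toReal * ((po s) a).toReal
            = ∑ s : S, |f (s', a') - g (s', a')| * ((P (s', a')) s).toReal := by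
              congr 1; ext s
              rw [← Finset.mul_sum, pmf_sum_toReal, mul_one]
          _ = |f (s', a') - g (s', a')| * ∑ s : S, ((P (s', a')) s).toReal := by
              rw [Finset.mul_sum]
          _ = |f (s', a') - g (s', a')| := by rw [pmf_sum_toReal, mul_one]

lemma step_pol (g : S × A → ℝ) (hg : ∀ sa, 0 ≤ g sa) (hg1 : ∑ sa : S × A, g sa = 1)
    (P : S × A → PMF S) (po po' : S → PMF A) (c : ℝ) (hc : ∀ s : S, tv (po s) (po' s) ≤ c) :
    ∑ sa : S × A, |tstep g P po sa - tstep g P po' sa| ≤ 2 * c := by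
  have key : ∑ sa : S × A, |tstep g P po sa - tstep g P po' sa|
      ≤ ∑ s' : S, ∑ a' : A, ∑ sa : S × A,
          g (s', a') * ((P (s', a')) sa.1).toReal *
            |((po sa.1) sa.2).toReal - ((po' sa.1) sa.2).toReal| := by
    have key0 : ∑ sa : S × A, |tstep g P po sa - tstep g P po' sa|
        ≤ ∑ sa : S × A, ∑ s' : S, ∑ a' : A,
            g (s', a') * ((P (s', a')) sa.1).toReal *
              |((po sa.1) sa.2).toReal - ((po' sa.1) sa.2).toReal| := ?_
    · refine key0.trans (le_of_eq ?_)
      rw [Finset.sum_comm]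
      congr 1; ext s'; rw [Finset.sum_comm]
    apply Finset.sum_le_sum; intro sa _
    unfold tstep
    rw [← Finset.sum_sub_distrib]
    refine (Finset.abs_sum_le_sum_abs _ _).trans ?_
    apply Finset.sum_le_sum; intro s' _
    rw [← Finset.sum_sub_distrib]
    refine (Finset.abs_sum_le_sum_abs _ _).trans ?_
    apply Finset.sum_le_sum; intro a' _
    have h : g (s', a') * ((P (s', a')) sa.1).toReal * ((po sa.1) sa.2).toReal -
        g (s', a') * ((P (s', a')) sa.1).toReal * ((po' sa.1) sa.2).toReal =
        g (s', a') * ((P (s', a')) sa.1).toReal *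
          (((po sa.1) sa.2).toReal - ((po' sa.1) sa.2).toReal) := by ring
    rw [h, abs_mul, abs_mul, abs_of_nonneg (hg _), abs_of_nonneg ENNReal.toReal_nonneg]
  refine key.trans ?_
  have inner : ∀ s' a', ∑ sa : S × A,
      g (s', a') * ((P (s', a')) sa.1).toReal *
        |((po sa.1) sa.2).toReal - ((po' sa.1) sa.2).toReal| ≤ g (s', a') * (2 * c) := by
    intro s' a'
    rw [Fintype.sum_prod_type]
    calc ∑ s : S, ∑ a : A, g (s', a') * ((P (s', a')) s).toReal *
            |((po s) a).toReal - ((po' s) a).toReal|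
        = ∑ s : S, g (s', a') * ((P (s', a')) s).toReal * (2 * tv (po s) (po' s)) := by
          congr 1; ext s
          rw [← Finset.mul_sum, sum_abs_eq_two_tv]
      _ ≤ ∑ s : S, g (s', a') * ((P (s', a')) s).toReal * (2 * c) := by
          apply Finset.sum_le_sum; intro s _
          have h1 : 0 ≤ g (s', a') * ((P (s', a')) s).toReal := by
            have := hg (s', a'); positivity
          have := hc s
          nlinarith
      _ = g (s', a') * (2 * c) * ∑ s : S, ((P (s', a')) s).toReal := by
          rw [Finset.mul_sum]; congr 1; ext s; ring
      _ = g (s', a') * (2 * c) := by rw [pmf_sum_toReal, mul_one]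
  calc ∑ s' : S, ∑ a' : A, ∑ sa : S × A,
        g (s', a') * ((P (s', a')) sa.1).toReal *
          |((po sa.1) sa.2).toReal - ((po' sa.1) sa.2).toReal|
      ≤ ∑ s' : S, ∑ a' : A, g (s', a') * (2 * c) := by
        apply Finset.sum_le_sum; intro s' _
        apply Finset.sum_le_sum; intro a' _
        exact inner s' a'
    _ = (∑ sa : S × A, g sa) * (2 * c) := by
        rw [Fintype.sum_prod_type, Finset.sum_mul]
        congr 1; ext s'; rw [Finset.sum_mul]
    _ = 2 * c := by rw [hg1, one_mul]

end Step

/-- Branched rollout bound with model error under the new policy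
(Theorem 4.3 / Theorem A.2). -/
theorem mbpo_branched_bound_current_policy
    {S A : Type*} [Fintype S] [Fintype A] [Nonempty S] [Nonempty A]
    (p phat : S × A → PMF S) (πD π : S → PMF A) (ρ0 : PMF S)
    (r : S × A → ℝ) (rmax : ℝ) (hrmax : 0 ≤ rmax) (hr : ∀ sa : S × A, |r sa| ≤ rmax)
    (γ : ℝ) (hγ0 : 0 < γ) (hγ1 : γ < 1) (k : ℕ) (εm' επ : ℝ)
    (hεm' : ∀ t : ℕ, ∑ sa : S × A,
      marginal ρ0 (fun _ => π) (fun _ => p) t sa * tv (p sa) (phat sa) ≤ εm')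
    (hεπ : ∀ s : S, tv (πD s) (π s) ≤ επ) :
    ret γ r (marginal ρ0 (fun _ => π) (fun _ => p)) ≥
      ret γ r (marginal ρ0
          (fun t => if t < k then π else πD) (fun t => if t < k then phat else p)) -
        2 * rmax * (γ ^ (k + 1) * επ / (1 - γ) ^ 2 + γ ^ k * επ / (1 - γ) +
          (k : ℝ) * εm' / (1 - γ)) := by
  set πb : ℕ → S → PMF A := fun t => if t < k then π else πD with hπb
  set pb : ℕ → S × A → PMF S := fun t => if t < k then phat else p with hpb
  set d : ℕ → S × A → ℝ := marginal ρ0 (fun _ => π) (fun _ => p) with hd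
  set b : ℕ → S × A → ℝ := marginal ρ0 πb pb with hb
  have hγnn : (0:ℝ) ≤ γ := hγ0.le
  have h1γ : (0:ℝ) < 1 - γ := by linarith
  have hεπ0 : 0 ≤ επ := le_trans (tv_nonneg _ _) (hεπ (Classical.arbitrary S))
  have hεm0 : 0 ≤ εm' := by
    refine le_trans ?_ (hεm' 0)
    apply Finset.sum_nonneg; intro sa _
    exact mul_nonneg (marginal_nonneg _ _ _ 0 sa) (tv_nonneg _ _)
  -- the key total-variation recursion bound
  have hdelta : ∀ t : ℕ, ∑ sa : S × A, |d t sa - b t sa| ≤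
      2 * ((min t k : ℕ) : ℝ) * εm' + 2 * max ((t : ℝ) + 1 - (k : ℝ)) 0 * επ := by
    intro t
    induction t with
    | zero =>
      by_cases hk : 0 < k
      · have hbd : ∀ sa : S × A, d 0 sa = b 0 sa := by
          intro sa
          simp only [hd, hb, marginal, hπb, if_pos hk]
        have : ∑ sa : S × A, |d 0 sa - b 0 sa| = 0 := by
          apply Finset.sum_eq_zero; intro sa _; rw [hbd sa]; simp
        rw [this]
        have h1 : (0:ℝ) ≤ 2 * ((min 0 k : ℕ) : ℝ) * εm' :=
          mul_nonneg (mul_nonneg (by norm_num) (Nat.cast_nonneg _)) hεm0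
        have h2 : (0:ℝ) ≤ 2 * max (((0 : ℕ) : ℝ) + 1 - (k : ℝ)) 0 * επ :=
          mul_nonneg (mul_nonneg (by norm_num) (le_max_right _ _)) hεπ0
        linarith
      · have hk0 : k = 0 := Nat.eq_zero_of_not_pos hk
        subst hk0
        have hbd : ∀ sa : S × A, |d 0 sa - b 0 sa| =
            (ρ0 sa.1).toReal * |((π sa.1) sa.2).toReal - ((πD sa.1) sa.2).toReal| := by
          intro sa
          simp only [hd, hb, marginal, hπb, Nat.lt_irrefl, if_false]
          rw [← mul_sub, abs_mul, abs_of_nonneg ENNReal.toReal_nonneg]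
        calc ∑ sa : S × A, |d 0 sa - b 0 sa|
            = ∑ sa : S × A, (ρ0 sa.1).toReal *
                |((π sa.1) sa.2).toReal - ((πD sa.1) sa.2).toReal| := by
              exact Finset.sum_congr rfl fun sa _ => hbd sa
          _ = ∑ s : S, ∑ a : A, (ρ0 s).toReal *
                |((π s) a).toReal - ((πD s) a).toReal| := by
              rw [Fintype.sum_prod_type]
          _ = ∑ s : S, (ρ0 s).toReal * (2 * tv (π s) (πD s)) := by
              congr 1; ext s
              rw [← Finset.mul_sum, sum_abs_eq_two_tv]
          _ ≤ ∑ s : S, (ρ0 s).toReal * (2 * επ) := by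
              apply Finset.sum_le_sum; intro s _
              have h1 : tv (π s) (πD s) ≤ επ := by rw [tv_comm]; exact hεπ s
              have h2 : (0:ℝ) ≤ (ρ0 s).toReal := ENNReal.toReal_nonneg
              nlinarith
          _ = 2 * επ := by rw [← Finset.sum_mul, pmf_sum_toReal, one_mul]
          _ ≤ 2 * ((min 0 0 : ℕ) : ℝ) * εm' + 2 * max (((0 : ℕ) : ℝ) + 1 - ((0 : ℕ) : ℝ)) 0 * επ := by
              push_cast
              norm_num
    | succ n ih =>
      -- unfold one step
      have hdstep : ∀ sa : S × A, d (n + 1) sa = tstep (d n) p π sa := by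
        intro sa; simp only [hd, marginal, tstep]
      have hbstep : ∀ sa : S × A, b (n + 1) sa = tstep (b n) (pb n) (πb (n + 1)) sa := by
        intro sa; simp only [hb, marginal, tstep]
      have tri : ∑ sa : S × A, |d (n + 1) sa - b (n + 1) sa| ≤
          (∑ sa : S × A, |tstep (d n) p π sa - tstep (d n) (pb n) π sa|) +
          (∑ sa : S × A, |tstep (d n) (pb n) π sa - tstep (b n) (pb n) π sa|) +
          (∑ sa : S × A, |tstep (b n) (pb n) π sa - tstep (b n) (pb n) (πb (n + 1)) sa|) := by
        rw [← Finset.sum_add_distrib, ← Finset.sum_add_distrib]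
        apply Finset.sum_le_sum; intro sa _
        rw [hdstep sa, hbstep sa]
        calc |tstep (d n) p π sa - tstep (b n) (pb n) (πb (n + 1)) sa|
            ≤ |tstep (d n) p π sa - tstep (d n) (pb n) π sa| +
              |tstep (d n) (pb n) π sa - tstep (b n) (pb n) (πb (n + 1)) sa| :=
              abs_sub_le _ _ _
          _ ≤ |tstep (d n) p π sa - tstep (d n) (pb n) π sa| +
              (|tstep (d n) (pb n) π sa - tstep (b n) (pb n) π sa| +
               |tstep (b n) (pb n) π sa - tstep (b n) (pb n) (πb (n + 1)) sa|) := by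
              have := abs_sub_le (tstep (d n) (pb n) π sa) (tstep (b n) (pb n) π sa)
                (tstep (b n) (pb n) (πb (n + 1)) sa)
              linarith
          _ = _ := by ring
      -- bound the three terms
      have hA2 : ∑ sa : S × A, |tstep (d n) (pb n) π sa - tstep (b n) (pb n) π sa| ≤
          ∑ sa : S × A, |d n sa - b n sa| := step_meas _ _ _ _
      have hdn_nonneg : ∀ sa, 0 ≤ d n sa := marginal_nonneg _ _ _ n
      have hbn_nonneg : ∀ sa, 0 ≤ b n sa := marginal_nonneg _ _ _ n
      have hbn_one : ∑ sa : S × A, b n sa = 1 := marginal_sum_one _ _ _ n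
      by_cases hnk : n < k
      · -- dynamics differ at step n
        have hpbn : pb n = phat := by simp [hpb, hnk]
        have hA1 : ∑ sa : S × A, |tstep (d n) p π sa - tstep (d n) (pb n) π sa| ≤
            2 * εm' := by
          refine (step_dyn (d n) hdn_nonneg p (pb n) π).trans ?_
          rw [hpbn]
          have : ∑ sa : S × A, d n sa * (2 * tv (p sa) (phat sa)) =
              2 * ∑ sa : S × A, d n sa * tv (p sa) (phat sa) := by
            rw [Finset.mul_sum]; congr 1; ext sa; ring
          rw [this]
          have := hεm' n
          linarith
        have hminn : min n k = n := min_eq_left hnk.le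
        have hminn1 : min (n + 1) k = n + 1 ∨ min (n + 1) k = k := min_choice _ _
        by_cases hn1k : n + 1 < k
        · -- policies agree at time n+1
          have hπbn : πb (n + 1) = π := by simp [hπb, hn1k]
          have hA3 : ∑ sa : S × A,
              |tstep (b n) (pb n) π sa - tstep (b n) (pb n) (πb (n + 1)) sa| ≤ 2 * 0 := by
            refine step_pol (b n) hbn_nonneg hbn_one (pb n) π (πb (n + 1)) 0 ?_
            intro s; rw [hπbn, tv_self]
          have hmin1 : min (n + 1) k = n + 1 := min_eq_left hn1k.le
          have hmax1 : max ((n : ℝ) + 1 - (k : ℝ)) 0 = 0 := by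
            apply max_eq_right
            have : ((n : ℝ) + 1) ≤ (k : ℝ) := by exact_mod_cast hnk
            linarith
          have hmax2 : max (((n : ℕ) + 1 : ℝ) + 1 - (k : ℝ)) 0 = 0 := by
            apply max_eq_right
            have : ((n : ℝ) + 2) ≤ (k : ℝ) := by exact_mod_cast hn1k
            push_cast
            linarith
          rw [hmax1] at ih
          have ih' := ih
          have goal : ∑ sa : S × A, |d (n + 1) sa - b (n + 1) sa| ≤
              2 * ((min (n + 1) k : ℕ) : ℝ) * εm' +
                2 * max (((n : ℕ) + 1 : ℝ) + 1 - (k : ℝ)) 0 * επ := by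
            rw [hmin1, hmax2]
            push_cast
            rw [hminn] at ih'
            push_cast at ih'
            linarith
          convert goal using 3
          push_cast
          ring
        · -- boundary step: policies differ at time n+1
          have hπbn : πb (n + 1) = πD := by simp [hπb, hn1k]
          have hA3 : ∑ sa : S × A,
              |tstep (b n) (pb n) π sa - tstep (b n) (pb n) (πb (n + 1)) sa| ≤ 2 * επ := by
            refine step_pol (b n) hbn_nonneg hbn_one (pb n) π (πb (n + 1)) επ ?_
            intro s; rw [hπbn, tv_comm]; exact hεπ s
          have hkn1 : k = n + 1 := by omega
          have hmin1 : min (n + 1) k = n + 1 := by omega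
          have hmax1 : max ((n : ℝ) + 1 - (k : ℝ)) 0 = 0 := by
            apply max_eq_right
            have : ((n : ℝ) + 1) ≤ (k : ℝ) := by exact_mod_cast hnk
            linarith
          have hmax2 : max (((n : ℕ) + 1 : ℝ) + 1 - (k : ℝ)) 0 = 1 := by
            rw [hkn1]
            push_cast
            rw [max_eq_left] <;> norm_num
          rw [hmax1] at ih
          rw [hminn] at ih
          have goal : ∑ sa : S × A, |d (n + 1) sa - b (n + 1) sa| ≤
              2 * ((min (n + 1) k : ℕ) : ℝ) * εm' +
                2 * max (((n : ℕ) + 1 : ℝ) + 1 - (k : ℝ)) 0 * επ := by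
            rw [hmin1, hmax2]
            push_cast
            push_cast at ih
            linarith
          convert goal using 3
          push_cast
          ring
      · -- after the branch point: same dynamics, policies differ
        have hpbn : pb n = p := by simp [hpb, hnk]
        have hA1 : ∑ sa : S × A, |tstep (d n) p π sa - tstep (d n) (pb n) π sa| ≤ 0 := by
          refine (step_dyn (d n) hdn_nonneg p (pb n) π).trans ?_
          rw [hpbn]
          apply le_of_eq
          apply Finset.sum_eq_zero; intro sa _
          rw [tv_self]; ring
        have hn1k : ¬ (n + 1 < k) := by omega
        have hπbn : πb (n + 1) = πD := by simp [hπb, hn1k]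
        have hA3 : ∑ sa : S × A,
            |tstep (b n) (pb n) π sa - tstep (b n) (pb n) (πb (n + 1)) sa| ≤ 2 * επ := by
          refine step_pol (b n) hbn_nonneg hbn_one (pb n) π (πb (n + 1)) επ ?_
          intro s; rw [hπbn, tv_comm]; exact hεπ s
        have hkn : k ≤ n := Nat.le_of_not_lt hnk
        have hmin1 : min (n + 1) k = k := min_eq_right (by omega)
        have hminn : min n k = k := min_eq_right hkn
        have hmax1 : max ((n : ℝ) + 1 - (k : ℝ)) 0 = (n : ℝ) + 1 - (k : ℝ) := by
          apply max_eq_left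
          have : (k : ℝ) ≤ (n : ℝ) := by exact_mod_cast hkn
          linarith
        have hmax2 : max (((n : ℕ) + 1 : ℝ) + 1 - (k : ℝ)) 0 =
            ((n : ℝ) + 1) + 1 - (k : ℝ) := by
          apply max_eq_left
          have : (k : ℝ) ≤ (n : ℝ) := by exact_mod_cast hkn
          push_cast
          linarith
        rw [hmax1, hminn] at ih
        have goal : ∑ sa : S × A, |d (n + 1) sa - b (n + 1) sa| ≤
            2 * ((min (n + 1) k : ℕ) : ℝ) * εm' +
              2 * max (((n : ℕ) + 1 : ℝ) + 1 - (k : ℝ)) 0 * επ := by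
          rw [hmin1, hmax2]
          push_cast
          linarith
        convert goal using 3
        push_cast
        ring
  -- expectations are bounded by rmax
  have habs_exp : ∀ (f : S × A → ℝ), (∀ sa, 0 ≤ f sa) → (∑ sa : S × A, f sa = 1) →
      |∑ sa : S × A, f sa * r sa| ≤ rmax := by
    intro f hf hf1
    refine (Finset.abs_sum_le_sum_abs _ _).trans ?_
    calc ∑ sa : S × A, |f sa * r sa| ≤ ∑ sa : S × A, f sa * rmax := by
          apply Finset.sum_le_sum; intro sa _
          rw [abs_mul, abs_of_nonneg (hf sa)]
          exact mul_le_mul_of_nonneg_left (hr sa) (hf sa)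
      _ = rmax := by rw [← Finset.sum_mul, hf1, one_mul]
  -- summability of both returns
  have hsum_geom : Summable (fun t : ℕ => γ ^ t) := summable_geometric_of_lt_one hγnn hγ1
  have hsummable : ∀ (m : ℕ → S × A → ℝ), (∀ t sa, 0 ≤ m t sa) →
      (∀ t, ∑ sa : S × A, m t sa = 1) →
      Summable (fun t : ℕ => γ ^ t * ∑ sa : S × A, m t sa * r sa) := by
    intro m hm hm1
    refine Summable.of_norm_bounded (hsum_geom.mul_left rmax) ?_
    intro t
    show |γ ^ t * ∑ sa : S × A, m t sa * r sa| ≤ rmax * γ ^ t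
    rw [abs_mul, abs_of_nonneg (pow_nonneg hγnn t)]
    have := habs_exp (m t) (hm t) (hm1 t)
    nlinarith [pow_nonneg hγnn t]
  have hF : Summable (fun t : ℕ => γ ^ t * ∑ sa : S × A, d t sa * r sa) :=
    hsummable d (marginal_nonneg _ _ _) (marginal_sum_one _ _ _)
  have hG : Summable (fun t : ℕ => γ ^ t * ∑ sa : S × A, b t sa * r sa) :=
    hsummable b (marginal_nonneg _ _ _) (marginal_sum_one _ _ _)
  -- majorant series
  set M1 : ℕ → ℝ := fun t => γ ^ t * ((min t k : ℕ) : ℝ) with hM1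
  set M2 : ℕ → ℝ := fun t => γ ^ t * max ((t : ℝ) + 1 - (k : ℝ)) 0 with hM2
  have hsumM1 : Summable M1 := by
    refine Summable.of_norm_bounded (hsum_geom.mul_left (k : ℝ)) ?_
    intro t
    have h1 : ((min t k : ℕ) : ℝ) ≤ (k : ℝ) := by exact_mod_cast min_le_right t k
    have h2 : (0:ℝ) ≤ ((min t k : ℕ) : ℝ) := Nat.cast_nonneg _
    show |γ ^ t * ((min t k : ℕ) : ℝ)| ≤ (k : ℝ) * γ ^ t
    rw [abs_of_nonneg (by positivity)]
    nlinarith [pow_nonneg hγnn t]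
  have htsumM1 : ∑' t, M1 t ≤ (k : ℝ) * (1 - γ)⁻¹ := by
    have hle : ∀ t, M1 t ≤ (k : ℝ) * γ ^ t := by
      intro t
      have h1 : ((min t k : ℕ) : ℝ) ≤ (k : ℝ) := by exact_mod_cast min_le_right t k
      simp only [hM1]
      nlinarith [pow_nonneg hγnn t]
    have := Summable.tsum_le_tsum hle hsumM1 (hsum_geom.mul_left (k : ℝ))
    rwa [tsum_mul_left, tsum_geometric_of_lt_one hγnn hγ1] at this
  -- M2 computation
  have hnorm : ‖γ‖ < 1 := by rw [Real.norm_eq_abs, abs_of_pos hγ0]; exact hγ1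
  have hsumg1 : Summable (fun i : ℕ => (i : ℝ) * γ ^ i) := by
    have := summable_pow_mul_geometric_of_norm_lt_one (R := ℝ) 1 hnorm
    simpa using this
  have hsumg : Summable (fun i : ℕ => ((i : ℝ) + 1) * γ ^ i) := by
    have := hsumg1.add hsum_geom
    refine this.congr ?_
    intro i; ring
  have htsumg : ∑' i : ℕ, ((i : ℝ) + 1) * γ ^ i = γ / (1 - γ) ^ 2 + (1 - γ)⁻¹ := by
    have h1 : ∑' i : ℕ, ((i : ℝ) * γ ^ i + γ ^ i) = γ / (1 - γ) ^ 2 + (1 - γ)⁻¹ := by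
      rw [Summable.tsum_add hsumg1 hsum_geom, tsum_coe_mul_geometric_of_norm_lt_one hnorm,
        tsum_geometric_of_lt_one hγnn hγ1]
    rw [← h1]
    apply tsum_congr; intro i; ring
  have hM2shift : ∀ i : ℕ, M2 (i + k) = γ ^ k * (((i : ℝ) + 1) * γ ^ i) := by
    intro i
    show γ ^ (i + k) * max (((i + k : ℕ) : ℝ) + 1 - (k : ℝ)) 0 = _
    have hmax : max (((i + k : ℕ) : ℝ) + 1 - (k : ℝ)) 0 = (i : ℝ) + 1 := by
      rw [max_eq_left]
      · push_cast; ring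
      · push_cast; linarith [Nat.cast_nonneg (α := ℝ) i]
    rw [hmax, pow_add]
    ring
  have hsumM2 : Summable M2 := by
    refine (summable_nat_add_iff k).mp ?_
    refine ((hsumg.mul_left (γ ^ k)).congr ?_)
    intro i
    exact (hM2shift i).symm
  have htsumM2 : ∑' t, M2 t = γ ^ k * (γ / (1 - γ) ^ 2 + (1 - γ)⁻¹) := by
    have h := Summable.sum_add_tsum_nat_add k hsumM2
    have hz : ∑ i ∈ Finset.range k, M2 i = 0 := by
      apply Finset.sum_eq_zero; intro i hi
      have hik : i < k := Finset.mem_range.mp hi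
      show γ ^ i * max (((i : ℕ) : ℝ) + 1 - (k : ℝ)) 0 = 0
      have : max ((i : ℝ) + 1 - (k : ℝ)) 0 = 0 := by
        apply max_eq_right
        have : ((i : ℝ) + 1) ≤ (k : ℝ) := by exact_mod_cast hik
        linarith
      rw [this, mul_zero]
    have h2 : ∑' i : ℕ, M2 (i + k) = γ ^ k * ∑' i : ℕ, ((i : ℝ) + 1) * γ ^ i := by
      rw [← tsum_mul_left]
      exact tsum_congr hM2shift
    rw [← h, hz, zero_add, h2, htsumg]
  -- termwise bound on the difference of returns
  set M : ℕ → ℝ := fun t => 2 * rmax * (εm' * M1 t + επ * M2 t) with hM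
  have hsumM : Summable M := (((hsumM1.mul_left εm').add (hsumM2.mul_left επ)).mul_left
    (2 * rmax))
  have hterm : ∀ t : ℕ, γ ^ t * (∑ sa : S × A, b t sa * r sa) -
      γ ^ t * (∑ sa : S × A, d t sa * r sa) ≤ M t := by
    intro t
    have hγt : (0:ℝ) ≤ γ ^ t := pow_nonneg hγnn t
    have habs : |(∑ sa : S × A, b t sa * r sa) - (∑ sa : S × A, d t sa * r sa)| ≤
        rmax * ∑ sa : S × A, |d t sa - b t sa| := by
      rw [← Finset.sum_sub_distrib]
      refine (Finset.abs_sum_le_sum_abs _ _).trans ?_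
      rw [Finset.mul_sum]
      apply Finset.sum_le_sum; intro sa _
      have h1 : |b t sa * r sa - d t sa * r sa| = |d t sa - b t sa| * |r sa| := by
        rw [← abs_mul, abs_sub_comm]
        congr 1; ring
      rw [h1]
      calc |d t sa - b t sa| * |r sa| ≤ |d t sa - b t sa| * rmax :=
            mul_le_mul_of_nonneg_left (hr sa) (abs_nonneg _)
        _ = rmax * |d t sa - b t sa| := mul_comm _ _
    have h2 := hdelta t
    calc γ ^ t * (∑ sa : S × A, b t sa * r sa) - γ ^ t * (∑ sa : S × A, d t sa * r sa)
        = γ ^ t * ((∑ sa : S × A, b t sa * r sa) - (∑ sa : S × A, d t sa * r sa)) := by ring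
      _ ≤ γ ^ t * |(∑ sa : S × A, b t sa * r sa) - (∑ sa : S × A, d t sa * r sa)| :=
          mul_le_mul_of_nonneg_left (le_abs_self _) hγt
      _ ≤ γ ^ t * (rmax * ∑ sa : S × A, |d t sa - b t sa|) :=
          mul_le_mul_of_nonneg_left habs hγt
      _ ≤ γ ^ t * (rmax * (2 * ((min t k : ℕ) : ℝ) * εm' +
            2 * max ((t : ℝ) + 1 - (k : ℝ)) 0 * επ)) := by
          refine mul_le_mul_of_nonneg_left ?_ hγt
          exact mul_le_mul_of_nonneg_left h2 hrmax
      _ = M t := by simp only [hM, hM1, hM2]; ring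
  -- sum it all up
  have hGF : ∑' t : ℕ, (γ ^ t * (∑ sa : S × A, b t sa * r sa) -
      γ ^ t * (∑ sa : S × A, d t sa * r sa)) ≤ ∑' t, M t :=
    Summable.tsum_le_tsum hterm (hG.sub hF) hsumM
  have hretdiff : ret γ r b - ret γ r d ≤ ∑' t, M t := by
    have : ret γ r b - ret γ r d = ∑' t : ℕ, (γ ^ t * (∑ sa : S × A, b t sa * r sa) -
        γ ^ t * (∑ sa : S × A, d t sa * r sa)) := (Summable.tsum_sub hG hF).symm
    rw [this]; exact hGF
  have htsumM : ∑' t, M t ≤ 2 * rmax * (γ ^ (k + 1) * επ / (1 - γ) ^ 2 +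
      γ ^ k * επ / (1 - γ) + (k : ℝ) * εm' / (1 - γ)) := by
    have heq : ∑' t, M t = 2 * rmax * (εm' * ∑' t, M1 t + επ * ∑' t, M2 t) := by
      simp only [hM]
      rw [tsum_mul_left]
      congr 1
      rw [Summable.tsum_add (hsumM1.mul_left εm') (hsumM2.mul_left επ), tsum_mul_left, tsum_mul_left]
    rw [heq, htsumM2]
    have hb1 : εm' * ∑' t, M1 t ≤ εm' * ((k : ℝ) * (1 - γ)⁻¹) :=
      mul_le_mul_of_nonneg_left htsumM1 hεm0
    have hb2 : εm' * ((k : ℝ) * (1 - γ)⁻¹) + επ * (γ ^ k * (γ / (1 - γ) ^ 2 + (1 - γ)⁻¹)) =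
        γ ^ (k + 1) * επ / (1 - γ) ^ 2 + γ ^ k * επ / (1 - γ) + (k : ℝ) * εm' / (1 - γ) := by
      field_simp
      ring
    have h2rm : (0:ℝ) ≤ 2 * rmax := by linarith
    calc 2 * rmax * (εm' * ∑' t, M1 t + επ * (γ ^ k * (γ / (1 - γ) ^ 2 + (1 - γ)⁻¹)))
        ≤ 2 * rmax * (εm' * ((k : ℝ) * (1 - γ)⁻¹) +
            επ * (γ ^ k * (γ / (1 - γ) ^ 2 + (1 - γ)⁻¹))) := by
          refine mul_le_mul_of_nonneg_left ?_ h2rm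
          linarith
      _ = 2 * rmax * (γ ^ (k + 1) * επ / (1 - γ) ^ 2 + γ ^ k * επ / (1 - γ) +
            (k : ℝ) * εm' / (1 - γ)) := by rw [hb2]
  have final := hretdiff.trans htsumM
  show ret γ r d ≥ ret γ r b - 2 * rmax * (γ ^ (k + 1) * επ / (1 - γ) ^ 2 +
    γ ^ k * επ / (1 - γ) + (k : ℝ) * εm' / (1 - γ))
  linarith
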